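/- Let R_1, …, R_n (n ≥ 4) be a REP instance in boundary B, and let r be weights r_{i,α} ∈ [0,1] with Σ_α r_{i,α} = 1 for each i whose fractional density at every point of B is at most k. Let d_1, …, d_n be mutually independent random directions with P(d_i = α) = r_{i,α}. If ε ∈ (0,3) and k ≥ (36/ε²)·ln n, then with probability at least 1 − 4/n, the density of the random escape assignment (d_1, …, d_n) at every point of B is at most (1+ε)·k (randomized rounding is a (1+ε)-approximation with high probability). -/

import Mathlib

/-- One of the four axis-aligned escape directions. -/
inductive Dir | left | right | up | down
deriving DecidableEq

instance : Fintype Dir where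
  elems := {Dir.left, Dir.right, Dir.up, Dir.down}
  complete := by intro x; cases x <;> simp

/-- A closed axis-aligned rectangle `[xmin,xmax] × [ymin,ymax]`. -/
structure Rect where
  xmin : ℝ
  xmax : ℝ
  ymin : ℝ
  ymax : ℝ

/-- The point set of a rectangle. -/
def Rect.pts (r : Rect) : Set (ℝ × ℝ) :=
  {p | r.xmin ≤ p.1 ∧ p.1 ≤ r.xmax ∧ r.ymin ≤ p.2 ∧ p.2 ≤ r.ymax}

/-- The rectangle is a genuine (nonempty) closed rectangle. -/
def Rect.proper (r : Rect) : Prop := r.xmin ≤ r.xmax ∧ r.ymin ≤ r.ymax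

/-- The boundary box `B = [0,W] × [0,H]`. -/
def boundaryBox (W H : ℝ) : Set (ℝ × ℝ) := {p | 0 ≤ p.1 ∧ p.1 ≤ W ∧ 0 ≤ p.2 ∧ p.2 ≤ H}

/-- The rectangle is contained in the boundary box `[0,W] × [0,H]`. -/
def Rect.inB (W H : ℝ) (r : Rect) : Prop :=
  0 ≤ r.xmin ∧ r.xmax ≤ W ∧ 0 ≤ r.ymin ∧ r.ymax ≤ H

/-- The escape path of a rectangle in a given direction, inside `[0,W] × [0,H]`. -/
def Rect.escape (W H : ℝ) (r : Rect) : Dir → Set (ℝ × ℝ)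
  | Dir.right => {p | r.xmin ≤ p.1 ∧ p.1 ≤ W ∧ r.ymin ≤ p.2 ∧ p.2 ≤ r.ymax}
  | Dir.left  => {p | 0 ≤ p.1 ∧ p.1 ≤ r.xmax ∧ r.ymin ≤ p.2 ∧ p.2 ≤ r.ymax}
  | Dir.up    => {p | r.xmin ≤ p.1 ∧ p.1 ≤ r.xmax ∧ r.ymin ≤ p.2 ∧ p.2 ≤ H}
  | Dir.down  => {p | r.xmin ≤ p.1 ∧ p.1 ≤ r.xmax ∧ 0 ≤ p.2 ∧ p.2 ≤ r.ymax}

/-- Density at point `p` of the escape assignment `σ` restricted to the subfamily `S`. -/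
noncomputable def density {n : ℕ} (W H : ℝ) (R : Fin n → Rect) (S : Set (Fin n))
    (σ : Fin n → Dir) (p : ℝ × ℝ) : ℕ :=
  {i | i ∈ S ∧ p ∈ (R i).escape W H (σ i)}.ncard

/-- The optimal (minimum over assignments of the maximum over points of `B`) density of
the subfamily `S`. -/
noncomputable def optDensity {n : ℕ} (W H : ℝ) (R : Fin n → Rect) (S : Set (Fin n)) : ℕ :=
  sInf {k | ∃ σ : Fin n → Dir, ∀ p ∈ boundaryBox W H, density W H R S σ p ≤ k}

/-- `R j` blocks `R i` in direction `α`. -/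
def blocks {n : ℕ} (W H : ℝ) (R : Fin n → Rect) (α : Dir) (j i : Fin n) : Prop :=
  j ≠ i ∧ ¬ Disjoint (R j).pts ((R i).escape W H α)

/-- `R i` is free in direction `α` within the subfamily `S`: no other rectangle of `S`
blocks it in direction `α`. -/
def free {n : ℕ} (W H : ℝ) (R : Fin n → Rect) (S : Set (Fin n)) (i : Fin n) (α : Dir) : Prop :=
  ∀ j ∈ S, j ≠ i → Disjoint ((R i).escape W H α) (R j).pts

/-- `peel W H R ℓ` is the set of indices remaining after removing peeling levels `1,…,ℓ`. -/
def peel {n : ℕ} (W H : ℝ) (R : Fin n → Rect) : ℕ → Set (Fin n)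
  | 0 => Set.univ
  | ℓ + 1 => {i ∈ peel W H R ℓ | ¬ ∃ α, free W H R (peel W H R ℓ) i α}

/-- The peeling level of rectangle `R i` (the least `ℓ` at which it has been removed). -/
noncomputable def levelOf {n : ℕ} (W H : ℝ) (R : Fin n → Rect) (i : Fin n) : ℕ :=
  sInf {ℓ | i ∉ peel W H R ℓ}

/-- The number `ρ` of nonempty peeling levels. -/
noncomputable def numLevels {n : ℕ} (W H : ℝ) (R : Fin n → Rect) : ℕ :=
  sInf {ℓ | peel W H R ℓ = ∅}

section RRAux

open Classical in
lemma density_univ_eq {n : ℕ} (W H : ℝ) (R : Fin n → Rect) (σ : Fin n → Dir) (p : ℝ × ℝ) :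
    density W H R Set.univ σ p
      = (Finset.univ.filter fun i => p ∈ (R i).escape W H (σ i)).card := by
  rw [density]
  rw [show {i | i ∈ Set.univ ∧ p ∈ (R i).escape W H (σ i)}
      = ↑(Finset.univ.filter fun i => p ∈ (R i).escape W H (σ i)) by ext i; simp]
  exact Set.ncard_coe_finset _

lemma sum_prod_pi {n : ℕ} {D : Type*} [Fintype D] (f : Fin n → D → ℝ) :
    ∑ σ : Fin n → D, ∏ i, f i (σ i) = ∏ i, ∑ α, f i α := (Fintype.prod_sum f).symm

lemma exp_coef_bound (ε : ℝ) (hε0 : 0 < ε) (hε3 : ε < 3) :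
    Real.exp (ε/4) - 1 - (ε/4) * (1 + ε) ≤ -(5/24) * ε^2 := by
  have h := Real.exp_bound' (by positivity : (0:ℝ) ≤ ε/4) (by linarith : ε/4 ≤ 1)
    (n := 3) (by norm_num)
  norm_num [Finset.sum_range_succ, Nat.factorial] at h
  nlinarith [pow_pos hε0 3, sq_nonneg ε]

lemma chernoff_point {n : ℕ} (r : Fin n → Dir → ℝ) (q : Fin n → Dir → Prop)
    [∀ i α, Decidable (q i α)]
    (hr0 : ∀ i α, 0 ≤ r i α) (hrsum : ∀ i, ∑ α : Dir, r i α = 1)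
    (k a t : ℝ) (ht : 0 < t)
    (hq : ∑ i : Fin n, ∑ α : Dir, (if q i α then r i α else 0) ≤ k) :
    ∑ σ : Fin n → Dir,
      (if a < ((Finset.univ.filter fun i => q i (σ i)).card : ℝ) then ∏ i, r i (σ i) else 0)
      ≤ Real.exp ((Real.exp t - 1) * k - t * a) := by
  set g : Fin n → Dir → ℝ := fun i α => (if q i α then Real.exp t else 1) * r i α with hg
  set Q : Fin n → ℝ := fun i => ∑ α, (if q i α then r i α else 0) with hQdef
  have hP0 : ∀ σ : Fin n → Dir, 0 ≤ ∏ i, r i (σ i) :=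
    fun σ => Finset.prod_nonneg fun i _ => hr0 i (σ i)
  have hexp1 : (1:ℝ) ≤ Real.exp t := by
    rw [show (1:ℝ) = Real.exp 0 from (Real.exp_zero).symm]; exact Real.exp_le_exp.2 ht.le
  have key : ∀ σ : Fin n → Dir,
      (if a < ((Finset.univ.filter fun i => q i (σ i)).card : ℝ) then ∏ i, r i (σ i) else 0)
      ≤ Real.exp (-(t*a)) * ∏ i, g i (σ i) := by
    intro σ
    have hprod : ∏ i, g i (σ i)
        = Real.exp (t * ((Finset.univ.filter fun i => q i (σ i)).card : ℝ)) * ∏ i, r i (σ i) := by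
      rw [hg]
      rw [Finset.prod_mul_distrib]
      congr 1
      rw [Finset.card_filter]
      push_cast
      rw [Finset.mul_sum, Real.exp_sum]
      apply Finset.prod_congr rfl
      intro i _
      by_cases h : q i (σ i) <;> simp [h]
    rw [hprod, ← mul_assoc, ← Real.exp_add]
    by_cases hb : a < ((Finset.univ.filter fun i => q i (σ i)).card : ℝ)
    · rw [if_pos hb]
      refine le_mul_of_one_le_left (hP0 σ) (Real.one_le_exp ?_)
      nlinarith
    · rw [if_neg hb]
      exact mul_nonneg (Real.exp_nonneg _) (hP0 σ)
  calc ∑ σ : Fin n → Dir,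
      (if a < ((Finset.univ.filter fun i => q i (σ i)).card : ℝ) then ∏ i, r i (σ i) else 0)
      ≤ ∑ σ : Fin n → Dir, Real.exp (-(t*a)) * ∏ i, g i (σ i) :=
        Finset.sum_le_sum fun σ _ => key σ
    _ = Real.exp (-(t*a)) * ∑ σ : Fin n → Dir, ∏ i, g i (σ i) := by rw [← Finset.mul_sum]
    _ = Real.exp (-(t*a)) * ∏ i, ∑ α, g i α := by rw [sum_prod_pi]
    _ ≤ Real.exp (-(t*a)) * Real.exp ((Real.exp t - 1) * k) := by
        have hfac : ∀ i, ∑ α, g i α = 1 + (Real.exp t - 1) * Q i := by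
          intro i
          have h1 : ∀ α, g i α = r i α + (Real.exp t - 1) * (if q i α then r i α else 0) := by
            intro α; by_cases h : q i α <;> simp [hg, h] <;> ring
          rw [Finset.sum_congr rfl fun α _ => h1 α, Finset.sum_add_distrib, hrsum,
            ← Finset.mul_sum]
        have hQ0 : ∀ i, 0 ≤ Q i := by
          intro i
          apply Finset.sum_nonneg
          intro α _
          split <;> simp [hr0 i α]
        have step : ∏ i, ∑ α, g i α ≤ Real.exp ((Real.exp t - 1) * ∑ i, Q i) := by
          calc ∏ i, ∑ α, g i α = ∏ i, (1 + (Real.exp t - 1) * Q i) :=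
                Finset.prod_congr rfl fun i _ => hfac i
            _ ≤ ∏ i, Real.exp ((Real.exp t - 1) * Q i) := by
                apply Finset.prod_le_prod
                · intro i _; nlinarith [hQ0 i]
                · intro i _
                  have := Real.add_one_le_exp ((Real.exp t - 1) * Q i)
                  linarith
            _ = Real.exp (∑ i, (Real.exp t - 1) * Q i) := (Real.exp_sum _ _).symm
            _ = Real.exp ((Real.exp t - 1) * ∑ i, Q i) := by rw [← Finset.mul_sum]
        refine mul_le_mul_of_nonneg_left (step.trans (Real.exp_le_exp.2 ?_)) (Real.exp_nonneg _)
        have hQk : ∑ i, Q i ≤ k := hq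
        nlinarith
    _ = Real.exp ((Real.exp t - 1) * k - t * a) := by
        rw [← Real.exp_add]; ring_nf

end RRAux

set_option maxHeartbeats 1000000 in
/-- Randomized rounding is a `(1+ε)`-approximation w.h.p.: if `r` is a
probability distribution over directions for each rectangle with fractional density at
most `k` everywhere in `B`, `ε ∈ (0,3)`, and `k ≥ (36/ε²)·ln n` with `n ≥ 4`, then
choosing each direction `d i` independently with `P(d i = α) = r i α`, the probability
that the resulting assignment has density at most `(1+ε)·k` at every point of `B` is at
least `1 - 4/n`. (The probability of an event `E` over assignments is
`∑_{σ ∈ E} ∏ i, r i (σ i)`.) -/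
theorem randomized_rounding_whp {n : ℕ} (hn : 4 ≤ n) (W H : ℝ) (R : Fin n → Rect)
    (hprop : ∀ i, (R i).proper) (hin : ∀ i, (R i).inB W H)
    (r : Fin n → Dir → ℝ) (k : ℝ)
    (hr01 : ∀ i α, 0 ≤ r i α ∧ r i α ≤ 1)
    (hrsum : ∀ i, ∑ α : Dir, r i α = 1)
    (hfrac : ∀ p ∈ boundaryBox W H,
      ∑ i : Fin n, ∑ α : Dir, ((R i).escape W H α).indicator (fun _ => r i α) p ≤ k)
    (ε : ℝ) (hε0 : 0 < ε) (hε3 : ε < 3)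
    (hk : (36 / ε ^ 2) * Real.log n ≤ k) :
    1 - 4 / (n : ℝ) ≤
      ∑ σ : Fin n → Dir,
        ({σ' : Fin n → Dir | ∀ p ∈ boundaryBox W H,
            (density W H R Set.univ σ' p : ℝ) ≤ (1 + ε) * k}.indicator
          (fun σ' => ∏ i, r i (σ' i)) σ) := by
    classical
  have hn1 : (1:ℝ) ≤ (n:ℝ) := by
    have : (1:ℕ) ≤ n := by omega
    exact_mod_cast this
  have hn4 : (4:ℝ) ≤ (n:ℝ) := by exact_mod_cast hn
  have hn0 : (0:ℝ) < (n:ℝ) := by linarith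
  have hlog0 : 0 ≤ Real.log n := Real.log_nonneg hn1
  have hk0 : 0 ≤ k := le_trans (by positivity) hk
  have hr0 : ∀ i α, 0 ≤ r i α := fun i α => (hr01 i α).1
  obtain ⟨P, hPdef⟩ : ∃ P : (Fin n → Dir) → ℝ, P = fun σ => ∏ i, r i (σ i) := ⟨_, rfl⟩
  have hP0 : ∀ σ, 0 ≤ P σ := fun σ => by
    rw [hPdef]; exact Finset.prod_nonneg fun i _ => hr0 i (σ i)
  obtain ⟨E, hEdef⟩ : ∃ E : Set (Fin n → Dir), E = {σ' : Fin n → Dir | ∀ p ∈ boundaryBox W H,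
      (density W H R Set.univ σ' p : ℝ) ≤ (1 + ε) * k} := ⟨_, rfl⟩
  rw [show {σ' : Fin n → Dir | ∀ p ∈ boundaryBox W H,
      (density W H R Set.univ σ' p : ℝ) ≤ (1 + ε) * k} = E from hEdef.symm,
    show (fun σ' : Fin n → Dir => ∏ i, r i (σ' i)) = P from hPdef.symm]
  have total : ∑ σ : Fin n → Dir, P σ = 1 := by
    simp only [hPdef]
    rw [sum_prod_pi]
    simp [hrsum]
  have hsplit : ∑ σ : Fin n → Dir, E.indicator P σ
      + ∑ σ : Fin n → Dir, (if σ ∈ E then 0 else P σ) = 1 := by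
    refine Eq.trans ?_ total
    rw [← Finset.sum_add_distrib]
    apply Finset.sum_congr rfl
    intro σ _
    by_cases h : σ ∈ E <;> simp [Set.indicator_apply, h]
  -- the grid
  obtain ⟨xs, hxsdef⟩ : ∃ xs : Finset ℝ, xs = insert 0 (insert W
      ((Finset.univ.image fun i => (R i).xmin)
      ∪ (Finset.univ.image fun i => (R i).xmax))) := ⟨_, rfl⟩
  obtain ⟨ys, hysdef⟩ : ∃ ys : Finset ℝ, ys = insert 0 (insert H
      ((Finset.univ.image fun i => (R i).ymin)
      ∪ (Finset.univ.image fun i => (R i).ymax))) := ⟨_, rfl⟩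
  obtain ⟨G, hGdef⟩ : ∃ G : Finset (ℝ × ℝ),
      G = (xs ×ˢ ys).filter (fun p' => p' ∈ boundaryBox W H) := ⟨_, rfl⟩
  have h0xs : (0:ℝ) ∈ xs := by simp [hxsdef]
  have h0ys : (0:ℝ) ∈ ys := by simp [hysdef]
  have hWxs : W ∈ xs := by simp [hxsdef]
  have hHys : H ∈ ys := by simp [hysdef]
  have hxminxs : ∀ i, (R i).xmin ∈ xs := by
    intro i
    simp only [hxsdef, Finset.mem_insert, Finset.mem_union, Finset.mem_image, Finset.mem_univ,
      true_and]
    exact Or.inr (Or.inr (Or.inl ⟨i, rfl⟩))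
  have hxmaxxs : ∀ i, (R i).xmax ∈ xs := by
    intro i
    simp only [hxsdef, Finset.mem_insert, Finset.mem_union, Finset.mem_image, Finset.mem_univ,
      true_and]
    exact Or.inr (Or.inr (Or.inr ⟨i, rfl⟩))
  have hyminys : ∀ i, (R i).ymin ∈ ys := by
    intro i
    simp only [hysdef, Finset.mem_insert, Finset.mem_union, Finset.mem_image, Finset.mem_univ,
      true_and]
    exact Or.inr (Or.inr (Or.inl ⟨i, rfl⟩))
  have hymaxys : ∀ i, (R i).ymax ∈ ys := by
    intro i
    simp only [hysdef, Finset.mem_insert, Finset.mem_union, Finset.mem_image, Finset.mem_univ,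
      true_and]
    exact Or.inr (Or.inr (Or.inr ⟨i, rfl⟩))
  -- discretization
  have hdisc : ∀ p ∈ boundaryBox W H, ∃ p' ∈ G,
      ∀ i (α : Dir), p ∈ (R i).escape W H α → p' ∈ (R i).escape W H α := by
    intro p hp
    obtain ⟨hp1, hp2, hp3, hp4⟩ := hp
    have htx : (xs.filter (· ≤ p.1)).Nonempty := ⟨0, Finset.mem_filter.2 ⟨h0xs, hp1⟩⟩
    have hty : (ys.filter (· ≤ p.2)).Nonempty := ⟨0, Finset.mem_filter.2 ⟨h0ys, hp3⟩⟩
    obtain ⟨x', hx'def⟩ : ∃ x, x = (xs.filter (· ≤ p.1)).max' htx := ⟨_, rfl⟩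
    obtain ⟨y', hy'def⟩ : ∃ y, y = (ys.filter (· ≤ p.2)).max' hty := ⟨_, rfl⟩
    have hx'mem : x' ∈ xs := by
      rw [hx'def]; exact (Finset.mem_filter.1 ((xs.filter (· ≤ p.1)).max'_mem htx)).1
    have hx'le : x' ≤ p.1 := by
      rw [hx'def]; exact (Finset.mem_filter.1 ((xs.filter (· ≤ p.1)).max'_mem htx)).2
    have hx'max : ∀ z ∈ xs, z ≤ p.1 → z ≤ x' := by
      intro z hz hle
      rw [hx'def]
      exact Finset.le_max' (xs.filter (· ≤ p.1)) z (Finset.mem_filter.2 ⟨hz, hle⟩)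
    have hy'mem : y' ∈ ys := by
      rw [hy'def]; exact (Finset.mem_filter.1 ((ys.filter (· ≤ p.2)).max'_mem hty)).1
    have hy'le : y' ≤ p.2 := by
      rw [hy'def]; exact (Finset.mem_filter.1 ((ys.filter (· ≤ p.2)).max'_mem hty)).2
    have hy'max : ∀ z ∈ ys, z ≤ p.2 → z ≤ y' := by
      intro z hz hle
      rw [hy'def]
      exact Finset.le_max' (ys.filter (· ≤ p.2)) z (Finset.mem_filter.2 ⟨hz, hle⟩)
    have hx'0 : 0 ≤ x' := hx'max 0 h0xs hp1
    have hy'0 : 0 ≤ y' := hy'max 0 h0ys hp3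
    refine ⟨(x', y'), ?_, ?_⟩
    · rw [hGdef]
      refine Finset.mem_filter.2 ⟨Finset.mem_product.2 ⟨hx'mem, hy'mem⟩, ?_⟩
      exact ⟨hx'0, le_trans hx'le hp2, hy'0, le_trans hy'le hp4⟩
    · intro i α hmem
      cases α with
      | right =>
          obtain ⟨h1, h2, h3, h4⟩ := hmem
          exact ⟨hx'max _ (hxminxs i) h1, le_trans hx'le h2,
            hy'max _ (hyminys i) h3, le_trans hy'le h4⟩
      | left =>
          obtain ⟨h1, h2, h3, h4⟩ := hmem
          exact ⟨hx'0, le_trans hx'le h2, hy'max _ (hyminys i) h3, le_trans hy'le h4⟩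
      | up =>
          obtain ⟨h1, h2, h3, h4⟩ := hmem
          exact ⟨hx'max _ (hxminxs i) h1, le_trans hx'le h2,
            hy'max _ (hyminys i) h3, le_trans hy'le h4⟩
      | down =>
          obtain ⟨h1, h2, h3, h4⟩ := hmem
          exact ⟨hx'max _ (hxminxs i) h1, le_trans hx'le h2, hy'0, le_trans hy'le h4⟩
  -- density monotone along discretization
  have hdens : ∀ (σ : Fin n → Dir) (p p' : ℝ × ℝ),
      (∀ i (α : Dir), p ∈ (R i).escape W H α → p' ∈ (R i).escape W H α) →
      density W H R Set.univ σ p ≤ density W H R Set.univ σ p' := by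
    intro σ p p' h
    rw [density_univ_eq, density_univ_eq]
    apply Finset.card_le_card
    intro i hi
    simp only [Finset.mem_filter] at hi ⊢
    exact ⟨hi.1, h i (σ i) hi.2⟩
  -- per-point Chernoff bound
  have hpoint : ∀ p' ∈ G, ∑ σ : Fin n → Dir,
      (if (1+ε)*k < ((density W H R Set.univ σ p' : ℕ) : ℝ) then P σ else 0)
      ≤ ((n:ℝ)^7)⁻¹ := by
    intro p' hp'
    have hp'B : p' ∈ boundaryBox W H := by
      rw [hGdef] at hp'
      exact (Finset.mem_filter.1 hp').2
    have hq : ∑ i : Fin n, ∑ α : Dir, (if p' ∈ (R i).escape W H α then r i α else 0) ≤ k := by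
      have h := hfrac p' hp'B
      calc ∑ i : Fin n, ∑ α : Dir, (if p' ∈ (R i).escape W H α then r i α else 0)
          = ∑ i : Fin n, ∑ α : Dir, ((R i).escape W H α).indicator (fun _ => r i α) p' := by
            refine Finset.sum_congr rfl fun i _ => Finset.sum_congr rfl fun α _ => ?_
            rw [Set.indicator_apply]
        _ ≤ k := h
    have hcher := chernoff_point r (fun i α => p' ∈ (R i).escape W H α)
      hr0 hrsum k ((1+ε)*k) (ε/4) (by positivity) hq
    have hgoal : ∑ σ : Fin n → Dir,
        (if (1+ε)*k < ((density W H R Set.univ σ p' : ℕ) : ℝ) then P σ else 0)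
        ≤ Real.exp ((Real.exp (ε/4) - 1) * k - (ε/4) * ((1+ε)*k)) := by
      beta_reduce at hcher
      refine le_trans (le_of_eq (Finset.sum_congr rfl fun σ _ => ?_)) hcher
      rw [density_univ_eq, hPdef]
    refine hgoal.trans ?_
    have hkε : 36 * Real.log n ≤ ε^2 * k := by
      have h2 : (0:ℝ) < ε^2 := by positivity
      rw [div_mul_eq_mul_div, div_le_iff₀ h2] at hk
      linarith
    have hcoef := exp_coef_bound ε hε0 hε3
    have hCle : (Real.exp (ε/4) - 1) * k - (ε/4) * ((1+ε)*k) ≤ -(7 * Real.log n) := by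
      nlinarith [mul_le_mul_of_nonneg_right hcoef hk0]
    have h7 : Real.exp (-(7 * Real.log n)) = ((n:ℝ)^7)⁻¹ := by
      rw [Real.exp_neg]
      congr 1
      rw [show (7:ℝ) * Real.log n = Real.log ((n:ℝ)^(7:ℕ)) by
        rw [Real.log_pow]; push_cast; ring]
      exact Real.exp_log (by positivity)
    calc Real.exp ((Real.exp (ε/4) - 1) * k - (ε/4) * ((1+ε)*k))
        ≤ Real.exp (-(7 * Real.log n)) := Real.exp_le_exp.2 hCle
      _ = ((n:ℝ)^7)⁻¹ := h7
  -- union bound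
  have hbadsum : ∑ σ : Fin n → Dir, (if σ ∈ E then 0 else P σ)
      ≤ (G.card : ℝ) * ((n:ℝ)^7)⁻¹ := by
    calc ∑ σ : Fin n → Dir, (if σ ∈ E then 0 else P σ)
        ≤ ∑ σ : Fin n → Dir, ∑ p' ∈ G,
            (if (1+ε)*k < ((density W H R Set.univ σ p' : ℕ) : ℝ) then P σ else 0) := by
          apply Finset.sum_le_sum
          intro σ _
          by_cases hσ : σ ∈ E
          · rw [if_pos hσ]
            apply Finset.sum_nonneg
            intro p'' _
            split
            · exact hP0 σ
            · exact le_refl 0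
          · rw [if_neg hσ]
            rw [hEdef] at hσ
            have hσ' : ∃ p ∈ boundaryBox W H,
                ¬ ((density W H R Set.univ σ p : ℕ) : ℝ) ≤ (1+ε)*k := by
              by_contra hcon
              push_neg at hcon
              exact hσ hcon
            obtain ⟨p, hpB, hbad⟩ := hσ'
            obtain ⟨p', hp'G, hmono⟩ := hdisc p hpB
            have hlt : (1+ε)*k < ((density W H R Set.univ σ p' : ℕ) : ℝ) := by
              refine lt_of_lt_of_le (lt_of_not_ge hbad) ?_
              exact_mod_cast hdens σ p p' hmono
            have h2 : (if (1+ε)*k < ((density W H R Set.univ σ p' : ℕ) : ℝ) then P σ else 0)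
                ≤ ∑ p'' ∈ G, (if (1+ε)*k < ((density W H R Set.univ σ p'' : ℕ) : ℝ)
                    then P σ else 0) := by
              refine Finset.single_le_sum
                (f := fun p'' => if (1+ε)*k < ((density W H R Set.univ σ p'' : ℕ) : ℝ)
                  then P σ else 0) (fun p'' _ => ?_) hp'G
              split
              · exact hP0 σ
              · exact le_refl 0
            rw [if_pos hlt] at h2
            exact h2
      _ = ∑ p' ∈ G, ∑ σ : Fin n → Dir,
            (if (1+ε)*k < ((density W H R Set.univ σ p' : ℕ) : ℝ) then P σ else 0) :=
          Finset.sum_comm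
      _ ≤ ∑ _p' ∈ G, ((n:ℝ)^7)⁻¹ := Finset.sum_le_sum hpoint
      _ = (G.card : ℝ) * ((n:ℝ)^7)⁻¹ := by rw [Finset.sum_const, nsmul_eq_mul]
  -- cardinality of the grid
  have hxscard : xs.card ≤ 2*n+2 := by
    have h1 := Finset.card_insert_le (0:ℝ) (insert W ((Finset.univ.image fun i => (R i).xmin)
      ∪ (Finset.univ.image fun i => (R i).xmax)))
    have h2 := Finset.card_insert_le W ((Finset.univ.image fun i => (R i).xmin)
      ∪ (Finset.univ.image fun i => (R i).xmax))
    have h3 := Finset.card_union_le (Finset.univ.image fun i => (R i).xmin)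
      (Finset.univ.image fun i => (R i).xmax)
    have h4 := Finset.card_image_le (s := (Finset.univ : Finset (Fin n)))
      (f := fun i => (R i).xmin)
    have h5 := Finset.card_image_le (s := (Finset.univ : Finset (Fin n)))
      (f := fun i => (R i).xmax)
    simp only [Finset.card_univ, Fintype.card_fin] at h4 h5
    rw [hxsdef]
    omega
  have hyscard : ys.card ≤ 2*n+2 := by
    have h1 := Finset.card_insert_le (0:ℝ) (insert H ((Finset.univ.image fun i => (R i).ymin)
      ∪ (Finset.univ.image fun i => (R i).ymax)))
    have h2 := Finset.card_insert_le H ((Finset.univ.image fun i => (R i).ymin)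
      ∪ (Finset.univ.image fun i => (R i).ymax))
    have h3 := Finset.card_union_le (Finset.univ.image fun i => (R i).ymin)
      (Finset.univ.image fun i => (R i).ymax)
    have h4 := Finset.card_image_le (s := (Finset.univ : Finset (Fin n)))
      (f := fun i => (R i).ymin)
    have h5 := Finset.card_image_le (s := (Finset.univ : Finset (Fin n)))
      (f := fun i => (R i).ymax)
    simp only [Finset.card_univ, Fintype.card_fin] at h4 h5
    rw [hysdef]
    omega
  have hGcard : G.card ≤ (2*n+2) * (2*n+2) := by
    rw [hGdef]
    refine le_trans (Finset.card_filter_le _ _) ?_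
    rw [Finset.card_product]
    exact Nat.mul_le_mul hxscard hyscard
  have hGcardR : (G.card : ℝ) ≤ (2*(n:ℝ)+2) * (2*(n:ℝ)+2) := by
    have := hGcard
    push_cast
    exact_mod_cast Nat.cast_le.2 this
  -- final numeric bound
  have hfinal : (G.card : ℝ) * ((n:ℝ)^7)⁻¹ ≤ 4 / (n:ℝ) := by
    have hinv0 : (0:ℝ) ≤ ((n:ℝ)^7)⁻¹ := by positivity
    refine le_trans (mul_le_mul_of_nonneg_right hGcardR hinv0) ?_
    rw [← div_eq_mul_inv, div_le_div_iff₀ (by positivity) hn0]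
    have hx : (2*(n:ℝ)+2) * (2*(n:ℝ)+2) * n ≤ 9 * (n:ℝ)^3 := by nlinarith
    have h4 : (4:ℝ)^4 ≤ (n:ℝ)^4 := pow_le_pow_left₀ (by norm_num) hn4 4
    have h5 : (n:ℝ)^3 * (n:ℝ)^4 = (n:ℝ)^7 := by ring
    have h6 : (n:ℝ)^3 * (4:ℝ)^4 ≤ (n:ℝ)^3 * (n:ℝ)^4 :=
      mul_le_mul_of_nonneg_left h4 (pow_pos hn0 3).le
    rw [h5] at h6
    norm_num at h6
    linarith [pow_pos hn0 3]
  have := hbadsum.trans hfinal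
  linarith
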